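/- Let G be a graph and L a k-assignment for G such that every color in the palette has multiplicity less than 2k. If there exists a proper L-coloring of G in which every color c is used at most ⌈η(c)/k⌉ times, then G has a proportional L-coloring. -/

import Mathlib

open Finset

/-- The multiplicity of a color `c` in a list assignment `L`: the number of
vertices whose list contains `c`. -/
def eta {V : Type*} [Fintype V] (L : V → Finset ℕ) (c : ℕ) : ℕ :=
  (Finset.univ.filter fun v => c ∈ L v).card

/-- `f` is a proportional `L`-coloring of `G` (with lists of size `k`): a proper
`L`-coloring in which each color `c` of the palette is used `⌊η(c)/k⌋` or `⌈η(c)/k⌉` times. -/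
def IsProportionalColoring {V : Type*} [Fintype V] (G : SimpleGraph V) (k : ℕ)
    (L : V → Finset ℕ) (f : V → ℕ) : Prop :=
  (∀ v, f v ∈ L v) ∧ (∀ u v, G.Adj u v → f u ≠ f v) ∧
  ∀ c, (∃ v, c ∈ L v) →
    (Finset.univ.filter fun v => f v = c).card = eta L c / k ∨
    (Finset.univ.filter fun v => f v = c).card = (eta L c + k - 1) / k

/-- `G` is proportionally `k`-choosable: every `k`-assignment admits a proportional coloring. -/
def ProportionallyChoosable {V : Type*} [Fintype V] (G : SimpleGraph V) (k : ℕ) : Prop :=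
  ∀ L : V → Finset ℕ, (∀ v, (L v).card = k) → ∃ f : V → ℕ, IsProportionalColoring G k L f

set_option linter.unusedSectionVars false
set_option linter.unusedVariables false

namespace Stmt14Aux

variable {V : Type*} [Fintype V] [DecidableEq V]


def usage (f : V → ℕ) (c : ℕ) : ℕ := (Finset.univ.filter fun v => f v = c).card

lemma usage_eq_zero_iff {f : V → ℕ} {c : ℕ} : usage f c = 0 ↔ ∀ v, f v ≠ c := by
  simp [usage, Finset.card_eq_zero, Finset.filter_eq_empty_iff]

lemma one_le_usage {f : V → ℕ} {c : ℕ} (v : V) (h : f v = c) : 1 ≤ usage f c := by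
  refine Finset.card_pos.2 ⟨v, ?_⟩
  simp [h]

lemma usage_le_one_inj {f : V → ℕ} {c : ℕ} (h : usage f c ≤ 1) {u w : V}
    (hu : f u = c) (hw : f w = c) : u = w := by
  have := Finset.card_le_one.1 h u (by simp [hu]) w (by simp [hw])
  exact this

lemma usage_update_self {f : V → ℕ} {v : V} {c0 : ℕ} (h : f v ≠ c0) :
    usage (Function.update f v c0) c0 = usage f c0 + 1 := by
  unfold usage
  have : (Finset.univ.filter fun w => Function.update f v c0 w = c0)
      = insert v (Finset.univ.filter fun w => f w = c0) := by
    ext w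
    rcases eq_or_ne w v with rfl | hw
    · simp [Function.update_self]
    · simp [Function.update_of_ne hw, hw]
  rw [this, Finset.card_insert_of_notMem (by simp [h])]

lemma usage_update_old {f : V → ℕ} {v : V} {c0 c1 : ℕ} (hv : f v = c1) (h : c1 ≠ c0) :
    usage (Function.update f v c0) c1 = usage f c1 - 1 := by
  unfold usage
  have : (Finset.univ.filter fun w => Function.update f v c0 w = c1)
      = (Finset.univ.filter fun w => f w = c1).erase v := by
    ext w
    rcases eq_or_ne w v with rfl | hw
    · simp [Function.update_self, h.symm]
    · simp [Function.update_of_ne hw, hw]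
  rw [this, Finset.card_erase_of_mem (by simp [hv])]

lemma usage_update_other {f : V → ℕ} {v : V} {c0 c : ℕ} (h0 : c ≠ c0) (h1 : f v ≠ c) :
    usage (Function.update f v c0) c = usage f c := by
  unfold usage
  congr 1
  ext w
  rcases eq_or_ne w v with rfl | hw
  · simp [Function.update_self, Ne.symm h0, h1]
  · simp [Function.update_of_ne hw]


def Step (L : V → Finset ℕ) (f : V → ℕ) (c c' : ℕ) : Prop := ∃ v, c ∈ L v ∧ f v = c'

def Surplus (k : ℕ) (L : V → Finset ℕ) (f : V → ℕ) (c : ℕ) : Prop :=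
  2 ≤ usage f c ∨ (1 ≤ usage f c ∧ eta L c < k)

lemma exists_mem_of_eta_pos {L : V → Finset ℕ} {c : ℕ} (h : 1 ≤ eta L c) :
    ∃ v, c ∈ L v := by
  obtain ⟨v, hv⟩ := Finset.card_pos.1 h
  exact ⟨v, (Finset.mem_filter.1 hv).2⟩

lemma exists_surplus {k : ℕ} (hk : 1 ≤ k) {L : V → Finset ℕ} (hL : ∀ v, (L v).card = k)
    {f : V → ℕ} (hf : ∀ v, f v ∈ L v) {c0 : ℕ} (hc0 : k ≤ eta L c0) (h0 : usage f c0 = 0) :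
    ∃ c, Relation.ReflTransGen (Step L f) c0 c ∧ Surplus k L f c := by
  by_contra hcon
  push_neg at hcon
  classical
  set R : Finset ℕ := (Finset.univ.biUnion L).filter
    (fun c => Relation.ReflTransGen (Step L f) c0 c) with hR
  have hc0P : c0 ∈ Finset.univ.biUnion L := by
    obtain ⟨v, hv⟩ := exists_mem_of_eta_pos (le_trans hk hc0)
    exact Finset.mem_biUnion.2 ⟨v, Finset.mem_univ v, hv⟩
  have hc0R : c0 ∈ R := Finset.mem_filter.2 ⟨hc0P, Relation.ReflTransGen.refl⟩
  have hns : ∀ c ∈ R, ¬ Surplus k L f c := fun c hc => hcon c (Finset.mem_filter.1 hc).2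
  have hstep : ∀ (v : V), ∀ c ∈ R, c ∈ L v → f v ∈ R.erase c0 := by
    intro v c hc hcv
    have hreach : Relation.ReflTransGen (Step L f) c0 (f v) :=
      Relation.ReflTransGen.tail (Finset.mem_filter.1 hc).2 ⟨v, hcv, rfl⟩
    have hmem : f v ∈ R := Finset.mem_filter.2
      ⟨Finset.mem_biUnion.2 ⟨v, Finset.mem_univ v, hf v⟩, hreach⟩
    refine Finset.mem_erase.2 ⟨?_, hmem⟩
    intro hEq
    have := one_le_usage v hEq
    omega
  have husage : ∀ c ∈ R.erase c0, usage f c ≤ 1 := by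
    intro c hc
    have h1 := hns c (Finset.mem_erase.1 hc).2
    unfold Surplus at h1
    push_neg at h1
    omega
  have hetaR : ∀ c ∈ R, k ≤ eta L c := by
    intro c hc
    rcases Relation.ReflTransGen.cases_tail (Finset.mem_filter.1 hc).2 with h | ⟨b, _, v, _, hv⟩
    · rwa [h]
    · have h1 := hns c hc
      unfold Surplus at h1
      push_neg at h1
      have := one_le_usage v hv
      exact h1.2 this
  set U : Finset V := Finset.univ.filter (fun v => ∃ c ∈ R, c ∈ L v) with hU
  have hUcard : U.card ≤ R.card - 1 := by
    have h1 : U.card ≤ (R.erase c0).card := by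
      apply Finset.card_le_card_of_injOn f
      · intro v hv
        obtain ⟨c, hcR, hcv⟩ := (Finset.mem_filter.1 hv).2
        exact hstep v c hcR hcv
      · intro u hu w hw hEq
        obtain ⟨c, hcR, hcv⟩ := (Finset.mem_filter.1 hu).2
        have hfu : f u ∈ R.erase c0 := hstep u c hcR hcv
        exact usage_le_one_inj (husage _ hfu) rfl hEq.symm
    rwa [Finset.card_erase_of_mem hc0R] at h1
  have hsum : ∑ c ∈ R, eta L c = ∑ v, (R.filter (· ∈ L v)).card := by
    have h1 : ∀ c, eta L c = ∑ v : V, if c ∈ L v then 1 else 0 := by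
      intro c; exact Finset.card_filter _ _
    calc ∑ c ∈ R, eta L c = ∑ c ∈ R, ∑ v : V, if c ∈ L v then 1 else 0 := by
          exact Finset.sum_congr rfl fun c _ => h1 c
      _ = ∑ v : V, ∑ c ∈ R, if c ∈ L v then 1 else 0 := Finset.sum_comm
      _ = ∑ v, (R.filter (· ∈ L v)).card := by
          exact Finset.sum_congr rfl fun v _ => (Finset.card_filter _ _).symm
  have hbound : ∑ v, (R.filter (· ∈ L v)).card ≤ U.card * k := by
    have hzero : ∀ v ∈ Finset.univ, v ∉ U → (R.filter (· ∈ L v)).card = 0 := by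
      intro v _ hv
      rw [Finset.card_eq_zero, Finset.filter_eq_empty_iff]
      intro c hc hcv
      exact hv (Finset.mem_filter.2 ⟨Finset.mem_univ v, ⟨c, hc, hcv⟩⟩)
    rw [← Finset.sum_subset (Finset.subset_univ U) hzero]
    calc ∑ v ∈ U, (R.filter (· ∈ L v)).card ≤ ∑ v ∈ U, k := by
          apply Finset.sum_le_sum
          intro v _
          calc (R.filter (· ∈ L v)).card ≤ (L v).card :=
                Finset.card_le_card (fun c hc => (Finset.mem_filter.1 hc).2)
            _ = k := hL v
      _ = U.card * k := by rw [Finset.sum_const, smul_eq_mul]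
  have hlow : R.card * k ≤ ∑ c ∈ R, eta L c := by
    calc R.card * k = ∑ _c ∈ R, k := by rw [Finset.sum_const, smul_eq_mul]
      _ ≤ ∑ c ∈ R, eta L c := Finset.sum_le_sum hetaR
  have hRpos : 1 ≤ R.card := Finset.card_pos.2 ⟨c0, hc0R⟩
  have : R.card * k ≤ (R.card - 1) * k := by
    calc R.card * k ≤ ∑ c ∈ R, eta L c := hlow
      _ ≤ U.card * k := hsum ▸ hbound
      _ ≤ (R.card - 1) * k := Nat.mul_le_mul_right k hUcard
  have := Nat.le_of_mul_le_mul_right this (by omega : 0 < k)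
  omega

lemma exists_path {r : ℕ → ℕ → Prop} {a b : ℕ} (h : Relation.ReflTransGen r a b) :
    ∃ m, ∃ g : ℕ → ℕ, g 0 = a ∧ g m = b ∧ ∀ i < m, r (g i) (g (i + 1)) := by
  induction h with
  | refl => exact ⟨0, fun _ => a, rfl, rfl, by omega⟩
  | @tail b c hab hbc ih =>
    obtain ⟨m, g, h0, hm, hs⟩ := ih
    refine ⟨m + 1, fun i => if i = m + 1 then c else g i, by simp [h0], by simp, ?_⟩
    intro i hi
    rcases Nat.lt_or_ge i m with h | h
    · simpa [Nat.ne_of_lt (by omega : i < m + 1), Nat.ne_of_lt (by omega : i + 1 < m + 1), Nat.ne_of_lt h]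
        using hs i h
    · have : i = m := by omega
      subst this
      simpa [Nat.ne_of_lt (by omega : i < i + 1), hm] using hbc

def Good (G : SimpleGraph V) (k : ℕ) (L : V → Finset ℕ) (f : V → ℕ) : Prop :=
  (∀ v, f v ∈ L v) ∧ (∀ u v, G.Adj u v → f u ≠ f v) ∧
  ∀ c, (∃ v, c ∈ L v) → usage f c ≤ (eta L c + k - 1) / k

def Deficient {V : Type*} [Fintype V] (k : ℕ) (L : V → Finset ℕ) (f : V → ℕ) : Finset ℕ :=
  (Finset.univ.biUnion L).filter fun c => k ≤ eta L c ∧ usage f c = 0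

lemma one_le_ceil {k e : ℕ} (hk : 1 ≤ k) (he : 1 ≤ e) : 1 ≤ (e + k - 1) / k :=
  (Nat.le_div_iff_mul_le (by omega)).2 (by omega)

lemma key (G : SimpleGraph V) {k : ℕ} (hk : 1 ≤ k) {L : V → Finset ℕ}
    (hL : ∀ v, (L v).card = k) :
    ∀ m : ℕ, ∀ f : V → ℕ, Good G k L f → ∀ c0 : ℕ, k ≤ eta L c0 → usage f c0 = 0 →
    ∀ g : ℕ → ℕ, g 0 = c0 → (∀ i < m, Step L f (g i) (g (i + 1))) → Surplus k L f (g m) →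
    ∃ f', Good G k L f' ∧ Deficient k L f' ⊆ (Deficient k L f).erase c0 := by
  intro m
  induction m using Nat.strong_induction_on with
  | _ m IH =>
  intro f hf c0 hc0 h0 g hg0 hgs hgm
  obtain ⟨hf1, hf2, hf3⟩ := hf
  have husage_pos : ∀ {c}, Surplus k L f c → 1 ≤ usage f c := by
    rintro c (h | h)
    · omega
    · exact h.1
  rcases Nat.eq_zero_or_pos m with rfl | hm
  · rw [hg0] at hgm
    have := husage_pos hgm
    omega
  by_cases hjlt : ∃ j, 1 ≤ j ∧ j < m ∧ Surplus k L f (g j)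
  · obtain ⟨j, hj1, hjm, hjs⟩ := hjlt
    exact IH j hjm f ⟨hf1, hf2, hf3⟩ c0 hc0 h0 g hg0 (fun i hi => hgs i (by omega)) hjs
  push_neg at hjlt
  -- first edge
  obtain ⟨v, hvL, hvf⟩ := hgs 0 hm
  rw [hg0] at hvL
  obtain ⟨c1, hc1def⟩ : ∃ c1, g 1 = c1 := ⟨g 1, rfl⟩
  rw [hc1def] at hvf
  have hc1ne : c1 ≠ c0 := by
    intro h
    have := one_le_usage v (hvf.trans h)
    omega
  have hnec0 : ∀ x, f x ≠ c0 := by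
    intro x hx
    have := one_le_usage x hx
    omega
  set f₁ := Function.update f v c0 with hf₁def
  have hu0 : usage f₁ c0 = 1 := by
    rw [usage_update_self (by rw [hvf]; exact hc1ne), h0]
  have hu1 : usage f₁ c1 = usage f c1 - 1 := usage_update_old hvf hc1ne
  have huo : ∀ c, c ≠ c0 → c ≠ c1 → usage f₁ c = usage f c := by
    intro c h1 h2
    exact usage_update_other h1 (by rw [hvf]; exact fun h => h2 h.symm)
  have hGood1 : Good G k L f₁ := by
    refine ⟨?_, ?_, ?_⟩
    · intro w
      rcases eq_or_ne w v with rfl | hw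
      · rw [hf₁def, Function.update_self]; exact hvL
      · rw [hf₁def, Function.update_of_ne hw]; exact hf1 w
    · intro u w hadj
      rcases eq_or_ne u v with rfl | hu
      · rw [hf₁def, Function.update_self]
        rcases eq_or_ne w u with rfl | hw
        · exact absurd rfl (G.ne_of_adj hadj)
        · rw [Function.update_of_ne hw]
          exact fun h => hnec0 w h.symm
      · rw [hf₁def, Function.update_of_ne hu]
        rcases eq_or_ne w v with rfl | hw
        · rw [Function.update_self]; exact hnec0 u
        · rw [Function.update_of_ne hw]; exact hf2 u w hadj
    · intro c hc
      rcases eq_or_ne c c0 with heq | hcc0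
      · rw [heq, hu0]
        exact one_le_ceil hk (by omega)
      rcases eq_or_ne c c1 with heq | hcc1
      · rw [heq, hu1]
        refine le_trans (Nat.sub_le _ _) ?_
        rw [heq] at hc
        exact hf3 c1 hc
      · rw [huo c hcc0 hcc1]; exact hf3 c hc
  rcases Nat.lt_or_ge m 2 with hm1 | hm2
  · -- m = 1 : c1 is surplus
    have hm1 : m = 1 := by omega
    subst hm1
    rw [hc1def] at hgm
    refine ⟨f₁, hGood1, ?_⟩
    intro c hc
    obtain ⟨hcP, hck, hcu⟩ := Finset.mem_filter.1 hc
    have hcc0 : c ≠ c0 := by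
      intro h; rw [h, hu0] at hcu; omega
    have hcc1 : c ≠ c1 := by
      intro h
      rcases hgm with hs | hs
      · rw [h, hu1] at hcu; omega
      · rw [h] at hck; have := hs.2; omega
    rw [huo c hcc0 hcc1] at hcu
    exact Finset.mem_erase.2 ⟨hcc0, Finset.mem_filter.2 ⟨hcP, hck, hcu⟩⟩
  · -- m ≥ 2 : c1 is not surplus
    have hnsc1 : ¬ Surplus k L f c1 := hc1def ▸ hjlt 1 le_rfl (by omega)
    have husec1 : usage f c1 = 1 := by
      have h1 := one_le_usage v hvf
      have h2 : ¬ (2 ≤ usage f c1) := fun h => hnsc1 (Or.inl h)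
      omega
    have hetac1 : k ≤ eta L c1 := by
      by_contra h
      exact hnsc1 (Or.inr ⟨one_le_usage v hvf, by omega⟩)
    have h1z : usage f₁ c1 = 0 := by rw [hu1, husec1]
    by_cases hrev : ∃ i, 2 ≤ i ∧ i ≤ m ∧ g i = c1
    · obtain ⟨i, hi2, him, hgi⟩ := hrev
      set g' : ℕ → ℕ := fun t => if t = 0 then c0 else g (t + i - 1) with hg'def
      have hg'0 : g' 0 = c0 := by simp [hg'def]
      have hg'eval : ∀ t, t ≠ 0 → g' t = g (t + i - 1) := by
        intro t ht
        simp only [hg'def, if_neg ht]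
      have hlt : m - i + 1 < m := by omega
      refine IH (m - i + 1) hlt f ⟨hf1, hf2, hf3⟩ c0 hc0 h0 g' hg'0 ?_ ?_
      · intro t ht
        rcases Nat.eq_zero_or_pos t with rfl | htpos
        · show Step L f (g' 0) (g' 1)
          rw [hg'0, hg'eval 1 one_ne_zero, (by omega : 1 + i - 1 = i), hgi]
          exact ⟨v, hvL, hvf⟩
        · have h1 : t ≠ 0 := by omega
          have h2 : t + 1 ≠ 0 := by omega
          rw [hg'eval t h1, hg'eval (t + 1) h2, (by omega : t + 1 + i - 1 = (t + i - 1) + 1)]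
          exact hgs (t + i - 1) (by omega)
      · have h1 : m - i + 1 ≠ 0 := by omega
        rw [hg'eval (m - i + 1) h1, (by omega : m - i + 1 + i - 1 = m)]
        exact hgm
    · push_neg at hrev
      set g' : ℕ → ℕ := fun t => g (t + 1) with hg'def
      have hedges : ∀ t, t < m - 1 → Step L f₁ (g' t) (g' (t + 1)) := by
        intro t ht
        obtain ⟨w, hw1, hw2⟩ := hgs (t + 1) (by omega)
        have hne : g (t + 1 + 1) ≠ c1 := hrev (t + 2) (by omega) (by omega)
        have hwv : w ≠ v := by
          intro h
          rw [h, hvf] at hw2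
          exact hne hw2.symm
        refine ⟨w, hw1, ?_⟩
        rw [hf₁def, Function.update_of_ne hwv]
        exact hw2
      have hsurp1 : Surplus k L f₁ (g' (m - 1)) := by
        have h2 : m - 1 + 1 = m := by omega
        have hgmne1 : g m ≠ c1 := hrev m hm2 le_rfl
        have hgmne0 : g m ≠ c0 := by
          intro h
          have := husage_pos hgm
          rw [h, h0] at this
          omega
        have hux : usage f₁ (g m) = usage f (g m) := huo _ hgmne0 hgmne1
        simp only [hg'def, h2]
        unfold Surplus at hgm ⊢
        rw [hux]
        exact hgm
      obtain ⟨f₂, hf₂, hsub⟩ := IH (m - 1) (by omega) f₁ hGood1 c1 hetac1 h1z g'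
        hc1def hedges hsurp1
      refine ⟨f₂, hf₂, hsub.trans ?_⟩
      intro c hc
      obtain ⟨hcne1, hc⟩ := Finset.mem_erase.1 hc
      obtain ⟨hcP, hck, hcu⟩ := Finset.mem_filter.1 hc
      have hcc0 : c ≠ c0 := by
        intro h; rw [h, hu0] at hcu; omega
      rw [huo c hcc0 hcne1] at hcu
      exact Finset.mem_erase.2 ⟨hcc0, Finset.mem_filter.2 ⟨hcP, hck, hcu⟩⟩


lemma good_of_empty (G : SimpleGraph V) {k : ℕ} (hk : 1 ≤ k) {L : V → Finset ℕ}
    (hmult : ∀ c : ℕ, (∃ v, c ∈ L v) → eta L c < 2 * k)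
    {f : V → ℕ} (hf : Good G k L f) (hd : Deficient k L f = ∅) :
    IsProportionalColoring G k L f := by
  refine ⟨hf.1, hf.2.1, ?_⟩
  intro c hv
  obtain ⟨v, hvc⟩ := hv
  have hP : c ∈ Finset.univ.biUnion L := Finset.mem_biUnion.2 ⟨v, Finset.mem_univ v, hvc⟩
  have heta1 : 1 ≤ eta L c := Finset.card_pos.2 ⟨v, by simp [hvc]⟩
  have hle : usage f c ≤ (eta L c + k - 1) / k := hf.2.2 c ⟨v, hvc⟩
  have h2k : eta L c < 2 * k := hmult c ⟨v, hvc⟩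
  show usage f c = eta L c / k ∨ usage f c = (eta L c + k - 1) / k
  by_cases hcase : k ≤ eta L c
  · have hu1 : usage f c ≠ 0 := by
      intro h
      have : c ∈ Deficient k L f := Finset.mem_filter.2 ⟨hP, hcase, h⟩
      rw [hd] at this
      exact absurd this (Finset.notMem_empty c)
    have hfloor : eta L c / k = 1 := Nat.div_eq_of_lt_le (by omega) (by omega)
    have hceil2 : (eta L c + k - 1) / k ≤ 2 := by
      have := (Nat.div_lt_iff_lt_mul (by omega : 0 < k)).2
        (by omega : eta L c + k - 1 < 3 * k)
      omega
    have hceil1 : 1 ≤ (eta L c + k - 1) / k := one_le_ceil hk heta1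
    rw [hfloor]
    omega
  · have hfloor : eta L c / k = 0 := Nat.div_eq_of_lt (by omega)
    have hceil1 : 1 ≤ (eta L c + k - 1) / k := one_le_ceil hk heta1
    have hceil2 : (eta L c + k - 1) / k ≤ 1 := by
      have := (Nat.div_lt_iff_lt_mul (by omega : 0 < k)).2
        (by omega : eta L c + k - 1 < 2 * k)
      omega
    rw [hfloor]
    omega

end Stmt14Aux

theorem stmt_14 {V : Type*} [Fintype V] (G : SimpleGraph V) (k : ℕ)
    (L : V → Finset ℕ) (hL : ∀ v, (L v).card = k)
    (hmult : ∀ c : ℕ, (∃ v, c ∈ L v) → eta L c < 2 * k)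
    (hex : ∃ f : V → ℕ, (∀ v, f v ∈ L v) ∧ (∀ u v, G.Adj u v → f u ≠ f v) ∧
      ∀ c : ℕ, (∃ v, c ∈ L v) →
        (Finset.univ.filter fun v => f v = c).card ≤ (eta L c + k - 1) / k) :
    ∃ f : V → ℕ, IsProportionalColoring G k L f := by
  classical
  open Stmt14Aux in
  obtain ⟨f0, hf01, hf02, hf03⟩ := hex
  rcases Nat.eq_zero_or_pos k with hk0 | hk
  · refine ⟨f0, hf01, hf02, ?_⟩
    intro c hc
    obtain ⟨v, hv⟩ := hc
    have hLv : L v = ∅ := Finset.card_eq_zero.1 (by rw [hL v, hk0])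
    rw [hLv] at hv
    exact absurd hv (Finset.notMem_empty c)
  · have hGood0 : Stmt14Aux.Good G k L f0 := ⟨hf01, hf02, hf03⟩
    have main : ∀ n : ℕ, ∀ f : V → ℕ, Stmt14Aux.Good G k L f →
        (Stmt14Aux.Deficient k L f).card ≤ n → ∃ f', IsProportionalColoring G k L f' := by
      intro n
      induction n with
      | zero =>
        intro f hf hcard
        exact ⟨f, Stmt14Aux.good_of_empty G hk hmult hf
          (Finset.card_eq_zero.1 (Nat.le_zero.1 hcard))⟩
      | succ n ih =>
        intro f hf hcard
        rcases Finset.eq_empty_or_nonempty (Stmt14Aux.Deficient k L f) with he | ⟨c0, hc0⟩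
        · exact ⟨f, Stmt14Aux.good_of_empty G hk hmult hf he⟩
        · obtain ⟨hc0P, hc0k, hc0u⟩ := Finset.mem_filter.1 hc0
          obtain ⟨c, hreach, hsurp⟩ := Stmt14Aux.exists_surplus hk hL hf.1 hc0k hc0u
          obtain ⟨m, g, hg0, hgm, hgs⟩ := Stmt14Aux.exists_path hreach
          obtain ⟨f', hf', hsub⟩ := Stmt14Aux.key G hk hL m f hf c0 hc0k hc0u g hg0 hgs
            (by rw [hgm]; exact hsurp)
          apply ih f' hf'
          have h1 : (Stmt14Aux.Deficient k L f').card
              ≤ ((Stmt14Aux.Deficient k L f).erase c0).card := Finset.card_le_card hsub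
          rw [Finset.card_erase_of_mem hc0] at h1
          omega
    exact main _ f0 hGood0 le_rfl
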